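/- Let G be a locally compact Hausdorff topological group and K a class of finite algebras. Then G is approximable by algebras of K in the group sense (for every compact C ⊆ G and every neighborhood U of the identity there exist H ∈ K and an injective j : H → G with C ⊆ j(H)U and j(x⊙y) ∈ j(x)j(y)U whenever x,y ∈ H satisfy j(x), j(y), j(x)·j(y) ∈ C) if and only if G is approximable by algebras of K in the general topological-algebra sense (for every compact C ⊆ G and every finite cover 𝒰 of C by open sets there exist H ∈ K and an injective j : H → G such that every U ∈ 𝒰 meeting C contains some j(h), and for all x,y ∈ H with j(x), j(y), j(x)·j(y) ∈ C there is U ∈ 𝒰 containing both j(x⊙y) and j(x)·j(y)). -/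

import Mathlib

open Pointwise

/-- For a locally compact group, approximability by algebras of a class `K`
in the group sense (compacts and neighborhoods of the identity) is equivalent
to approximability in the general topological-algebra sense (compacts and
finite open covers). -/
theorem stmt_10 {G : Type*} [Group G] [TopologicalSpace G] [IsTopologicalGroup G]
    [LocallyCompactSpace G] [T2Space G]
    (K : (H : Type) → (H → H → H) → Prop) :
    (∀ (C : Set G), IsCompact C → ∀ U ∈ nhds (1 : G),
      ∃ (H : Type) (hop : H → H → H) (j : H → G),
        Finite H ∧ K H hop ∧ Function.Injective j ∧
        C ⊆ Set.range j * U ∧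
        ∀ x y : H, j x ∈ C → j y ∈ C → j x * j y ∈ C →
          j (hop x y) ∈ (j x * j y) • U)
    ↔
    (∀ (C : Set G), IsCompact C →
      ∀ (𝒰 : Set (Set G)), 𝒰.Finite → (∀ U ∈ 𝒰, IsOpen U) → C ⊆ ⋃₀ 𝒰 →
      ∃ (H : Type) (hop : H → H → H) (j : H → G),
        Finite H ∧ K H hop ∧ Function.Injective j ∧
        (∀ U ∈ 𝒰, (C ∩ U).Nonempty → ∃ h : H, j h ∈ U) ∧
        (∀ x y : H, j x ∈ C → j y ∈ C → j x * j y ∈ C →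
          ∃ U ∈ 𝒰, j (hop x y) ∈ U ∧ j x * j y ∈ U)) := by
  classical
  constructor
  · -- group sense → topological sense
    intro hyp C hC 𝒰 hfin hopen hcover
    -- Lebesgue-type neighborhood
    have key : ∀ c ∈ C, ∃ W : Set G, IsOpen W ∧ (1:G) ∈ W ∧
        ∃ U ∈ 𝒰, ∀ d ∈ c • W, ∀ v ∈ W, d * v ∈ U := by
      intro c hc
      obtain ⟨U, hU𝒰, hcU⟩ := hcover hc
      have hpre : IsOpen {v : G | c * v ∈ U} :=
        (hopen U hU𝒰).preimage (continuous_const.mul continuous_id)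
      have h1 : (1:G) ∈ {v : G | c * v ∈ U} := by simpa using hcU
      obtain ⟨W, hWo, hW1, hWW⟩ := exists_open_nhds_one_mul_subset (hpre.mem_nhds h1)
      refine ⟨W, hWo, hW1, U, hU𝒰, ?_⟩
      rintro d ⟨w, hw, rfl⟩ v hv
      have : w * v ∈ {v : G | c * v ∈ U} := hWW (Set.mul_mem_mul hw hv)
      simpa [smul_eq_mul, mul_assoc] using this
    choose! W hWo hW1 Usel hUsel hWprop using key
    obtain ⟨t, htC, htcov⟩ := hC.elim_nhds_subcover (fun c => c • W c)
      (fun c hc => ((hWo c hc).smul c).mem_nhds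
        ⟨1, hW1 c hc, by simp⟩)
    have hV1nhds : (⋂ c ∈ t, W c) ∈ nhds (1:G) := by
      rw [Filter.biInter_finset_mem]
      exact fun c hct => (hWo c (htC c hct)).mem_nhds (hW1 c (htC c hct))
    have hV1prop : ∀ c ∈ C, ∃ U ∈ 𝒰, ∀ v ∈ ⋂ c ∈ t, W c, c * v ∈ U := by
      intro c hc
      have := htcov hc
      simp only [Set.mem_iUnion] at this
      obtain ⟨c₀, hc₀t, hc₀mem⟩ := this
      refine ⟨Usel c₀, hUsel c₀ (htC c₀ hc₀t), fun v hv => ?_⟩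
      exact hWprop c₀ (htC c₀ hc₀t) c hc₀mem v
        (Set.biInter_subset_of_mem hc₀t hv)
    -- witnesses for nonempty intersections
    have key2 : ∀ U ∈ 𝒰, ∃ S : Set G, S ∈ nhds (1:G) ∧
        ((C ∩ U).Nonempty → ∃ c ∈ C, ∀ v ∈ S, c * v⁻¹ ∈ U) := by
      intro U hU
      by_cases hne : (C ∩ U).Nonempty
      · obtain ⟨c, hcC, hcU⟩ := hne
        have ho : IsOpen {v : G | c * v⁻¹ ∈ U} :=
          (hopen U hU).preimage (continuous_const.mul continuous_inv)
        exact ⟨{v | c * v⁻¹ ∈ U}, ho.mem_nhds (by simpa using hcU),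
          fun _ => ⟨c, hcC, fun v hv => hv⟩⟩
      · exact ⟨Set.univ, Filter.univ_mem, fun h => absurd h hne⟩
    choose! S hSnhds hSc using key2
    have hV2nhds : (⋂ U ∈ 𝒰, S U) ∈ nhds (1:G) :=
      (Filter.biInter_mem hfin).2 fun U hU => hSnhds U hU
    obtain ⟨H, hop, j, hfinH, hK, hinj, hrange, hmul⟩ :=
      hyp C hC ((⋂ c ∈ t, W c) ∩ ⋂ U ∈ 𝒰, S U)
        (Filter.inter_mem hV1nhds hV2nhds)
    refine ⟨H, hop, j, hfinH, hK, hinj, ?_, ?_⟩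
    · intro U hU hne
      obtain ⟨c, hcC, hcU⟩ := hSc U hU hne
      have hc := hrange hcC
      rw [Set.mem_mul] at hc
      obtain ⟨a, ⟨h0, rfl⟩, v, hv, hav⟩ := hc
      refine ⟨h0, ?_⟩
      have hvS : v ∈ S U := Set.biInter_subset_of_mem hU hv.2
      have := hcU v hvS
      have heq : j h0 = c * v⁻¹ := by rw [← hav]; group
      rw [heq]; exact this
    · intro x y hx hy hxy
      obtain ⟨v, hv, hveq⟩ := hmul x y hx hy hxy
      obtain ⟨U, hU, hUp⟩ := hV1prop (j x * j y) hxy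
      refine ⟨U, hU, ?_, ?_⟩
      · have h' : j x * j y * v = j (hop x y) := by simpa [smul_eq_mul] using hveq
        rw [← h']; exact hUp v hv.1
      · have h1 : (1:G) ∈ ⋂ c ∈ t, W c := mem_of_mem_nhds hV1nhds
        simpa using hUp 1 h1
  · -- topological sense → group sense
    intro hyp C hC U hU
    obtain ⟨V0, hV0o, hV01, hV0U⟩ := exists_open_nhds_one_mul_subset hU
    set V : Set G := V0 ∩ V0⁻¹ with hVdef
    have hVo : IsOpen V := hV0o.inter hV0o.inv
    have hV1 : (1:G) ∈ V := ⟨hV01, by simpa using hV01⟩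
    have hVsym : ∀ v ∈ V, v⁻¹ ∈ V := by
      rintro v ⟨h1, h2⟩
      exact ⟨h2, by simpa using h1⟩
    have hVV : ∀ a ∈ V, ∀ b ∈ V, a * b ∈ U :=
      fun a ha b hb => hV0U (Set.mul_mem_mul ha.1 hb.1)
    obtain ⟨t, htC, htcov⟩ := hC.elim_nhds_subcover (fun c => c • V)
      (fun c hc => (hVo.smul c).mem_nhds ⟨1, hV1, by simp⟩)
    obtain ⟨H, hop, j, hfinH, hK, hinj, hcov2, hmul2⟩ :=
      hyp C hC ((fun c => c • V) '' (t : Set G))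
        (t.finite_toSet.image _)
        (by rintro _ ⟨c, -, rfl⟩; exact hVo.smul c)
        (by
          intro c hc
          have := htcov hc
          simp only [Set.mem_iUnion] at this
          obtain ⟨c₀, hc₀t, hmem⟩ := this
          exact ⟨c₀ • V, ⟨c₀, hc₀t, rfl⟩, hmem⟩)
    refine ⟨H, hop, j, hfinH, hK, hinj, ?_, ?_⟩
    · intro c hc
      have := htcov hc
      simp only [Set.mem_iUnion] at this
      obtain ⟨c₀, hc₀t, hmem⟩ := this
      obtain ⟨h0, hjh0⟩ := hcov2 (c₀ • V) ⟨c₀, hc₀t, rfl⟩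
        ⟨c₀, htC c₀ hc₀t, ⟨1, hV1, by simp⟩⟩
      obtain ⟨a, ha, hae⟩ := hjh0
      obtain ⟨b, hb, hbe⟩ := hmem
      rw [Set.mem_mul]
      refine ⟨j h0, Set.mem_range_self h0, (j h0)⁻¹ * c, ?_, by group⟩
      have : (j h0)⁻¹ * c = a⁻¹ * b := by
        rw [← hae, ← hbe]; simp [smul_eq_mul, mul_assoc]
      rw [this]
      exact hVV a⁻¹ (hVsym a ha) b hb
    · intro x y hx hy hxy
      obtain ⟨Wset, hW𝒰, hmhop, hmxy⟩ := hmul2 x y hx hy hxy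
      obtain ⟨c, -, rfl⟩ := hW𝒰
      obtain ⟨a, ha, hae⟩ := hmhop
      obtain ⟨b, hb, hbe⟩ := hmxy
      refine ⟨(j x * j y)⁻¹ * j (hop x y), ?_, by simp only [smul_eq_mul]; group⟩
      have : (j x * j y)⁻¹ * j (hop x y) = b⁻¹ * a := by
        rw [← hae, ← hbe]; simp [smul_eq_mul, mul_assoc]
      rw [this]
      exact hVV b⁻¹ (hVsym b hb) a ha
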